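/- Let A ∈ ℝ^{n×n} be invertible, W ∈ ℝ^{n×n} symmetric positive definite, S ∈ ℝ^{n×q} of full column rank, and X_k ∈ ℝ^{n×n}. Then X_{k+1} := X_k + W A^T S (S^T A W A^T S)^{-1} S^T (I − A X_k), which is the minimizer of ‖X − X_k‖_{F(W^{-1})} subject to S^T A X = S^T, is also a minimizer of ‖X − A^{-1}‖_{F(W^{-1})} over the affine set {X_k + W A^T S Y^T : Y ∈ ℝ^{n×q}}; i.e., for every Y ∈ ℝ^{n×q} one has ‖X_{k+1} − A^{-1}‖_{F(W^{-1})} ≤ ‖X_k + W A^T S Y^T − A^{-1}‖_{F(W^{-1})}. -/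

import Mathlib

open Matrix BigOperators

/-- Squared weighted Frobenius norm: `‖X‖_{F(W⁻¹)}² = Tr(Xᵀ W⁻¹ X W⁻¹)`. -/
noncomputable def wFNormSq {n : ℕ} (W X : Matrix (Fin n) (Fin n) ℝ) : ℝ :=
  (Xᵀ * W⁻¹ * X * W⁻¹).trace

/-- Weighted Frobenius norm `‖X‖_{F(W⁻¹)}`. -/
noncomputable def wFNorm {n : ℕ} (W X : Matrix (Fin n) (Fin n) ℝ) : ℝ :=
  Real.sqrt (wFNormSq W X)

theorem aux_posdef {n q : ℕ} (W : Matrix (Fin n) (Fin n) ℝ) (B : Matrix (Fin n) (Fin q) ℝ)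
    (hW : W.PosDef) (hB : Function.Injective B.mulVec) :
    (Bᵀ * W * B).PosDef := by
  have hWt : Wᵀ = W := by simpa using hW.isHermitian.eq
  refine Matrix.PosDef.of_dotProduct_mulVec_pos ?_ ?_
  · have h1 : (Bᵀ * W * B)ᴴ = Bᵀ * W * B := by
      rw [conjTranspose_mul, conjTranspose_mul]
      simp [hWt, Matrix.mul_assoc]
    exact h1
  · intro x hx
    have hBx : B.mulVec x ≠ 0 := fun h => hx (hB (h.trans (B.mulVec_zero).symm))
    have := hW.dotProduct_mulVec_pos hBx
    simpa [Matrix.mul_assoc, ← mulVec_mulVec, star_mulVec, dotProduct_mulVec,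
      vecMul_transpose] using this

theorem aux_inj {n q : ℕ} (S : Matrix (Fin n) (Fin q) ℝ) (hS : S.rank = q) :
    Function.Injective S.mulVec := by
  have h := S.mulVecLin.finrank_range_add_finrank_ker
  rw [show Module.finrank ℝ (LinearMap.range S.mulVecLin) = q from hS, Module.finrank_pi] at h
  simp only [Fintype.card_fin] at h
  have hker : Module.finrank ℝ (LinearMap.ker S.mulVecLin) = 0 := by omega
  exact LinearMap.ker_eq_bot.mp (Submodule.finrank_eq_zero.mp hker)

theorem aux_nonneg {n : ℕ} (W Z : Matrix (Fin n) (Fin n) ℝ) (hW : W.PosDef) :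
    0 ≤ wFNormSq W Z := by
  have h := hW.inv.posSemidef
  have hRex : ∃ R : Matrix (Fin n) (Fin n) ℝ, R * R = W⁻¹ ∧ Rᵀ = R := by
    open scoped MatrixOrder in
    exact ⟨CFC.sqrt W⁻¹, CFC.sqrt_mul_sqrt_self _ h.nonneg,
      by simpa using (CFC.sqrt_nonneg W⁻¹).posSemidef.1.eq⟩
  obtain ⟨R, hRR, hRt⟩ := hRex
  have key : wFNormSq W Z = ((R * Z * R)ᵀ * (R * Z * R)).trace := by
    rw [wFNormSq, ← hRR]
    rw [transpose_mul, transpose_mul, hRt]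
    simp only [Matrix.mul_assoc]
    rw [trace_mul_comm R]
    simp [Matrix.mul_assoc]
  rw [key]
  rw [Matrix.trace]
  apply Finset.sum_nonneg
  intro i _
  simp only [diag_apply, mul_apply, transpose_apply]
  apply Finset.sum_nonneg
  intro j _
  exact mul_self_nonneg _

theorem stmt2 {n q : ℕ} (A W : Matrix (Fin n) (Fin n) ℝ)
    (S : Matrix (Fin n) (Fin q) ℝ) (Xk : Matrix (Fin n) (Fin n) ℝ)
    (hA : IsUnit A.det) (hW : W.PosDef) (hS : S.rank = q) :
    ∀ Y : Matrix (Fin n) (Fin q) ℝ,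
      wFNorm W ((Xk + W * Aᵀ * S * (Sᵀ * A * W * Aᵀ * S)⁻¹ * Sᵀ * (1 - A * Xk)) - A⁻¹) ≤
        wFNorm W ((Xk + W * Aᵀ * S * Yᵀ) - A⁻¹) := by
  intro Y
  have hWt : Wᵀ = W := by simpa using hW.isHermitian.eq
  have hWd : IsUnit W.det := hW.det_pos.ne'.isUnit
  have hWiW : W⁻¹ * W = 1 := nonsing_inv_mul W hWd
  have hWWi : W * W⁻¹ = 1 := mul_nonsing_inv W hWd
  have hAAi : A * A⁻¹ = 1 := mul_nonsing_inv A hA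
  have cancel1 : ∀ {p : ℕ} (X : Matrix (Fin n) (Fin p) ℝ), W⁻¹ * (W * X) = X := by
    intro p X; rw [← Matrix.mul_assoc, hWiW, Matrix.one_mul]
  have cancel2 : ∀ {p : ℕ} (X : Matrix (Fin n) (Fin p) ℝ), W * (W⁻¹ * X) = X := by
    intro p X; rw [← Matrix.mul_assoc, hWWi, Matrix.one_mul]
  set M := Sᵀ * A * W * Aᵀ * S with hMdef
  have hAt : IsUnit Aᵀ := (Matrix.isUnit_iff_isUnit_det Aᵀ).mpr
    (by simpa [Matrix.det_transpose] using hA)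
  have hAinj : Function.Injective Aᵀ.mulVec := mulVec_injective_iff_isUnit.mpr hAt
  have hBinj : Function.Injective (Aᵀ * S).mulVec := by
    intro x y hxy
    apply aux_inj S hS
    apply hAinj
    simpa [mulVec_mulVec] using hxy
  have hM : M.PosDef := by
    have := aux_posdef W (Aᵀ * S) hW hBinj
    have heq : (Aᵀ * S)ᵀ * W * (Aᵀ * S) = M := by
      rw [hMdef]; simp [transpose_mul, Matrix.mul_assoc]
    rwa [heq] at this
  have hMMi : M * M⁻¹ = 1 := mul_nonsing_inv _ hM.det_pos.ne'.isUnit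
  set E := Xk - A⁻¹ with hE
  set C := W * Aᵀ * S with hC
  set V := E - C * (M⁻¹ * (Sᵀ * (A * E))) with hV
  set Z := Yᵀ + M⁻¹ * (Sᵀ * (A * E)) with hZ
  have hLHS : (Xk + C * M⁻¹ * Sᵀ * (1 - A * Xk)) - A⁻¹ = V := by
    rw [hV, hE, hC]
    simp only [Matrix.mul_sub, Matrix.sub_mul, Matrix.mul_add, Matrix.add_mul,
      Matrix.mul_one, Matrix.one_mul, hAAi, Matrix.mul_assoc]
    abel
  have hRHS : (Xk + C * Yᵀ) - A⁻¹ = V + C * Z := by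
    rw [hV, hZ, hE, Matrix.mul_add]
    abel
  rw [hLHS, hRHS]
  have hzero : Sᵀ * (A * V) = 0 := by
    have h1 : Sᵀ * (A * V) = Sᵀ * (A * E) - M * (M⁻¹ * (Sᵀ * (A * E))) := by
      rw [hV, hC, hMdef]
      simp only [Matrix.mul_sub, Matrix.sub_mul, Matrix.mul_assoc]
    rw [h1, ← Matrix.mul_assoc M, hMMi, Matrix.one_mul, sub_self]
  have hVad : Vᵀ * (Aᵀ * S) = 0 := by
    have := congrArg transpose hzero
    simpa [transpose_mul, Matrix.mul_assoc] using this
  have hcross : (Vᵀ * W⁻¹ * (C * Z) * W⁻¹).trace = 0 := by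
    have h1 : Vᵀ * W⁻¹ * (C * Z) * W⁻¹ = (Vᵀ * (Aᵀ * S)) * (Z * W⁻¹) := by
      rw [hC]
      simp only [Matrix.mul_assoc, cancel1]
    rw [h1, hVad, Matrix.zero_mul, trace_zero]
  have hcross2 : ((C * Z)ᵀ * W⁻¹ * V * W⁻¹).trace = 0 := by
    have h1 : (C * Z)ᵀ * W⁻¹ * V * W⁻¹ = Zᵀ * ((Sᵀ * (A * V)) * W⁻¹) := by
      rw [hC]
      simp only [transpose_mul, transpose_transpose, hWt, Matrix.mul_assoc, cancel2]
    rw [h1, hzero, Matrix.zero_mul, Matrix.mul_zero, trace_zero]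
  have hexp : wFNormSq W (V + C * Z) = wFNormSq W V + wFNormSq W (C * Z) := by
    unfold wFNormSq
    simp only [transpose_add, Matrix.add_mul, Matrix.mul_add, trace_add]
    rw [hcross, hcross2]
    ring
  unfold wFNorm
  apply Real.sqrt_le_sqrt
  rw [hexp]
  linarith [aux_nonneg W (C * Z) hW]
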